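/- Let N > 0 and a ≠ 0 be real. For all integers k₁, k₂ ≥ 0 there exists a unique monic polynomial P_{k₁,k₂} of degree k₁ + k₂ such that ∫_ℝ P_{k₁,k₂}(x) xʲ w₁(x) dx = 0 for 0 ≤ j ≤ k₁ − 1 and ∫_ℝ P_{k₁,k₂}(x) xʲ w₂(x) dx = 0 for 0 ≤ j ≤ k₂ − 1. Moreover the normalization constants h^{(1)}_{k₁,k₂} = ∫_ℝ P_{k₁,k₂}(x) x^{k₁} w₁(x) dx and h^{(2)}_{k₁,k₂} = ∫_ℝ P_{k₁,k₂}(x) x^{k₂} w₂(x) dx are nonzero. -/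

import Mathlib

open MeasureTheory Filter Topology Polynomial Asymptotics

noncomputable section

/-- first weight -/
def w1 (N a x : ℝ) : ℝ := Real.exp (-N * (x ^ 2 / 2 - a * x))

/-- second weight -/
def w2 (N a x : ℝ) : ℝ := Real.exp (-N * (x ^ 2 / 2 + a * x))

/-- `P` is the multiple Hermite polynomial with indices `k₁, k₂`. -/
def IsMHP (N a : ℝ) (k₁ k₂ : ℕ) (P : Polynomial ℝ) : Prop :=
  P.Monic ∧ P.natDegree = k₁ + k₂ ∧
  (∀ j < k₁, ∫ x : ℝ, P.eval x * x ^ j * w1 N a x = 0) ∧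
  (∀ j < k₂, ∫ x : ℝ, P.eval x * x ^ j * w2 N a x = 0)

/-- the normalization constant `h⁽¹⁾` -/
def hc1 (N a : ℝ) (k₁ : ℕ) (P : Polynomial ℝ) : ℝ :=
  ∫ x : ℝ, P.eval x * x ^ k₁ * w1 N a x

/-- the normalization constant `h⁽²⁾` -/
def hc2 (N a : ℝ) (k₂ : ℕ) (P : Polynomial ℝ) : ℝ :=
  ∫ x : ℝ, P.eval x * x ^ k₂ * w2 N a x

/-- decay class -/
def Decays (g : ℝ → ℝ) : Prop :=
  Continuous g ∧ ∃ δ C : ℝ, 0 < δ ∧ ∀ x, |g x| ≤ C * Real.exp (-δ * x ^ 2)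

lemma Decays.integrable {g : ℝ → ℝ} (hg : Decays g) : Integrable g := by
  obtain ⟨hc, δ, C, hδ, hb⟩ := hg
  refine Integrable.mono' ((integrable_exp_neg_mul_sq hδ).const_mul C)
    hc.aestronglyMeasurable ?_
  filter_upwards with x
  simpa [Real.norm_eq_abs] using hb x

lemma tendsto_bound_atTop {δ : ℝ} (C : ℝ) (hδ : 0 < δ) :
    Tendsto (fun x : ℝ => C * Real.exp (-δ * x ^ 2)) atTop (𝓝 0) := by
  have hsq : Tendsto (fun x : ℝ => x ^ 2) atTop atTop := tendsto_pow_atTop two_ne_zero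
  have h1 : Tendsto (fun x : ℝ => -δ * x ^ 2) atTop atBot :=
    (tendsto_const_mul_atBot_of_neg (by linarith)).mpr hsq
  have := (Real.tendsto_exp_atBot.comp h1).const_mul C
  simpa using this

lemma tendsto_bound_atBot {δ : ℝ} (C : ℝ) (hδ : 0 < δ) :
    Tendsto (fun x : ℝ => C * Real.exp (-δ * x ^ 2)) atBot (𝓝 0) := by
  have hsq : Tendsto (fun x : ℝ => x ^ 2) atBot atTop := by
    refine tendsto_atTop.mpr fun b => ?_
    filter_upwards [eventually_le_atBot (-(max b 0 + 1))] with x hx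
    nlinarith [le_max_left b 0, le_max_right b 0, sq_nonneg (x + max b 0 + 1)]
  have h1 : Tendsto (fun x : ℝ => -δ * x ^ 2) atBot atBot :=
    (tendsto_const_mul_atBot_of_neg (by linarith)).mpr hsq
  have := (Real.tendsto_exp_atBot.comp h1).const_mul C
  simpa using this

lemma Decays.tendsto_zero_atTop {g : ℝ → ℝ} (hg : Decays g) : Tendsto g atTop (𝓝 0) := by
  obtain ⟨hc, δ, C, hδ, hb⟩ := hg
  exact squeeze_zero_norm (fun x => by simpa [Real.norm_eq_abs] using hb x)
    (tendsto_bound_atTop C hδ)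

lemma Decays.tendsto_zero_atBot {g : ℝ → ℝ} (hg : Decays g) : Tendsto g atBot (𝓝 0) := by
  obtain ⟨hc, δ, C, hδ, hb⟩ := hg
  exact squeeze_zero_norm (fun x => by simpa [Real.norm_eq_abs] using hb x)
    (tendsto_bound_atBot C hδ)


lemma Decays.add {g h : ℝ → ℝ} (hg : Decays g) (hh : Decays h) :
    Decays (fun x => g x + h x) := by
  obtain ⟨hgc, δ₁, C₁, hδ₁, hb₁⟩ := hg
  obtain ⟨hhc, δ₂, C₂, hδ₂, hb₂⟩ := hh
  refine ⟨hgc.add hhc, min δ₁ δ₂, C₁ + C₂, lt_min hδ₁ hδ₂, fun x => ?_⟩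
  have e1 : Real.exp (-δ₁ * x ^ 2) ≤ Real.exp (-min δ₁ δ₂ * x ^ 2) := by
    apply Real.exp_le_exp.mpr
    nlinarith [min_le_left δ₁ δ₂, sq_nonneg x]
  have e2 : Real.exp (-δ₂ * x ^ 2) ≤ Real.exp (-min δ₁ δ₂ * x ^ 2) := by
    apply Real.exp_le_exp.mpr
    nlinarith [min_le_right δ₁ δ₂, sq_nonneg x]
  have h1 := hb₁ x; have h2 := hb₂ x
  have hC₁ : 0 ≤ C₁ := by
    by_contra hC
    have := hb₁ x
    nlinarith [abs_nonneg (g x), Real.exp_pos (-δ₁ * x ^ 2)]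
  have hC₂ : 0 ≤ C₂ := by
    by_contra hC
    have := hb₂ x
    nlinarith [abs_nonneg (h x), Real.exp_pos (-δ₂ * x ^ 2)]
  calc |g x + h x| ≤ |g x| + |h x| := abs_add_le _ _
    _ ≤ C₁ * Real.exp (-δ₁ * x ^ 2) + C₂ * Real.exp (-δ₂ * x ^ 2) := by linarith
    _ ≤ (C₁ + C₂) * Real.exp (-min δ₁ δ₂ * x ^ 2) := by nlinarith

lemma Decays.const_mul {g : ℝ → ℝ} (hg : Decays g) (c : ℝ) :
    Decays (fun x => c * g x) := by
  obtain ⟨hgc, δ, C, hδ, hb⟩ := hg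
  refine ⟨continuous_const.mul hgc, δ, |c| * C, hδ, fun x => ?_⟩
  rw [abs_mul, mul_assoc]
  exact mul_le_mul_of_nonneg_left (hb x) (abs_nonneg c)

lemma Decays.mul_x {g : ℝ → ℝ} (hg : Decays g) : Decays (fun x => x * g x) := by
  obtain ⟨hgc, δ, C, hδ, hb⟩ := hg
  have hC : 0 ≤ C := by
    by_contra hC
    have := hb 0
    nlinarith [abs_nonneg (g 0), Real.exp_pos (-δ * (0:ℝ) ^ 2)]
  refine ⟨continuous_id.mul hgc, δ / 2, (1 + 2 / δ) * C, half_pos hδ, fun x => ?_⟩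
  rw [abs_mul]
  have key : |x| * Real.exp (-δ * x ^ 2) ≤ (1 + 2 / δ) * Real.exp (-(δ / 2) * x ^ 2) := by
    have h1 : |x| ≤ (1 + 2 / δ) * (1 + (δ / 2) * x ^ 2) := by
      rw [show (1 + 2 / δ) * (1 + (δ / 2) * x ^ 2) = (δ + 2) * (2 + δ * x ^ 2) / (2 * δ) by
        field_simp, le_div_iff₀ (by positivity)]
      rcases abs_cases x with ⟨h, h'⟩ | ⟨h, h'⟩ <;>
        nlinarith [sq_nonneg (δ * x - 2), sq_nonneg (δ * x + 2)]
    have h2 : (1 + (δ / 2) * x ^ 2) ≤ Real.exp ((δ / 2) * x ^ 2) := by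
      have := Real.add_one_le_exp ((δ / 2) * x ^ 2)
      linarith
    have h3 : |x| ≤ (1 + 2 / δ) * Real.exp ((δ / 2) * x ^ 2) := by
      refine h1.trans (mul_le_mul_of_nonneg_left h2 ?_)
      positivity
    calc |x| * Real.exp (-δ * x ^ 2)
        ≤ ((1 + 2 / δ) * Real.exp ((δ / 2) * x ^ 2)) * Real.exp (-δ * x ^ 2) :=
          mul_le_mul_of_nonneg_right h3 (Real.exp_pos _).le
      _ = (1 + 2 / δ) * Real.exp (-(δ / 2) * x ^ 2) := by
          rw [mul_assoc, ← Real.exp_add]; ring_nf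
  calc |x| * |g x| ≤ |x| * (C * Real.exp (-δ * x ^ 2)) :=
        mul_le_mul_of_nonneg_left (hb x) (abs_nonneg x)
    _ = (|x| * Real.exp (-δ * x ^ 2)) * C := by ring
    _ ≤ ((1 + 2 / δ) * Real.exp (-(δ / 2) * x ^ 2)) * C :=
        mul_le_mul_of_nonneg_right key hC
    _ = (1 + 2 / δ) * C * Real.exp (-(δ / 2) * x ^ 2) := by ring

lemma Decays.mul_exp {g : ℝ → ℝ} (hg : Decays g) (c : ℝ) :
    Decays (fun x => Real.exp (c * x) * g x) := by
  obtain ⟨hgc, δ, C, hδ, hb⟩ := hg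
  have hC : 0 ≤ C := by
    by_contra hC
    have := hb 0
    nlinarith [abs_nonneg (g 0), Real.exp_pos (-δ * (0:ℝ) ^ 2)]
  refine ⟨(Real.continuous_exp.comp (continuous_const.mul continuous_id)).mul hgc,
    δ / 2, Real.exp (c ^ 2 / (2 * δ)) * C, half_pos hδ, fun x => ?_⟩
  rw [abs_mul, abs_of_pos (Real.exp_pos _)]
  have key : Real.exp (c * x) * Real.exp (-δ * x ^ 2)
      ≤ Real.exp (c ^ 2 / (2 * δ)) * Real.exp (-(δ / 2) * x ^ 2) := by
    rw [← Real.exp_add, ← Real.exp_add]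
    apply Real.exp_le_exp.mpr
    have h2δ : (0:ℝ) < 2 * δ := by positivity
    refine (mul_le_mul_iff_of_pos_right h2δ).mp ?_
    have hcc : c ^ 2 / (2 * δ) * (2 * δ) = c ^ 2 := by field_simp
    nlinarith [sq_nonneg (δ * x - c)]
  calc Real.exp (c * x) * |g x| ≤ Real.exp (c * x) * (C * Real.exp (-δ * x ^ 2)) :=
        mul_le_mul_of_nonneg_left (hb x) (Real.exp_pos _).le
    _ = (Real.exp (c * x) * Real.exp (-δ * x ^ 2)) * C := by ring
    _ ≤ (Real.exp (c ^ 2 / (2 * δ)) * Real.exp (-(δ / 2) * x ^ 2)) * C :=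
        mul_le_mul_of_nonneg_right key hC
    _ = Real.exp (c ^ 2 / (2 * δ)) * C * Real.exp (-(δ / 2) * x ^ 2) := by ring

lemma Decays.poly_mul {g : ℝ → ℝ} (hg : Decays g) (p : Polynomial ℝ) :
    Decays (fun x => p.eval x * g x) := by
  induction p using Polynomial.induction_on with
  | C c => simpa using hg.const_mul c
  | add p q hp hq =>
      rw [show (fun x => Polynomial.eval x (p + q) * g x)
          = fun x => Polynomial.eval x p * g x + Polynomial.eval x q * g x from
        funext fun x => by simp [add_mul]]
      exact hp.add hq
  | monomial n c hp =>
      rw [show (fun x => Polynomial.eval x (Polynomial.C c * Polynomial.X ^ (n + 1)) * g x)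
          = fun x => x * (Polynomial.eval x (Polynomial.C c * Polynomial.X ^ n) * g x) from
        funext fun x => by simp; ring]
      exact hp.mul_x

lemma decays_exp_quad {b c : ℝ} (hb : 0 < b) :
    Decays (fun x => Real.exp (-b * x ^ 2 + c * x)) := by
  refine ⟨by continuity, b / 2, Real.exp (c ^ 2 / (2 * b)), half_pos hb, fun x => ?_⟩
  rw [abs_of_pos (Real.exp_pos _), ← Real.exp_add]
  apply Real.exp_le_exp.mpr
  have h2b : (0:ℝ) < 2 * b := by positivity
  refine (mul_le_mul_iff_of_pos_right h2b).mp ?_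
  have hcc : c ^ 2 / (2 * b) * (2 * b) = c ^ 2 := by field_simp
  nlinarith [sq_nonneg (b * x - c)]

/-- the antiderivative vanishing at `-∞` -/
def anti (g : ℝ → ℝ) (x : ℝ) : ℝ := ∫ t in Set.Iic x, g t

lemma anti_hasDerivAt {g : ℝ → ℝ} (hg : Decays g) (x : ℝ) :
    HasDerivAt (anti g) (g x) x := by
  have hint := hg.integrable
  have heq : anti g = fun y => anti g 0 + ∫ t in (0:ℝ)..y, g t := by
    funext y
    rw [eq_comm, add_comm, ← eq_sub_iff_add_eq, eq_comm]
    exact intervalIntegral.integral_Iic_sub_Iic hint.integrableOn hint.integrableOn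
  rw [heq]
  exact (intervalIntegral.integral_hasDerivAt_right hint.intervalIntegrable
    hint.aestronglyMeasurable.stronglyMeasurableAtFilter hg.1.continuousAt).const_add _

lemma anti_decays {g : ℝ → ℝ} (hg : Decays g) (h0 : ∫ x, g x = 0) : Decays (anti g) := by
  obtain ⟨hc, δ, C, hδ, hb⟩ := hg
  have hint : Integrable g := Decays.integrable ⟨hc, δ, C, hδ, hb⟩
  have hC : 0 ≤ C := by
    by_contra hC
    have := hb 0
    nlinarith [abs_nonneg (g 0), Real.exp_pos (-δ * (0:ℝ) ^ 2)]
  have hintb : Integrable (fun t : ℝ => Real.exp (-(δ / 2) * t ^ 2)) :=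
    integrable_exp_neg_mul_sq (half_pos hδ)
  set I : ℝ := ∫ t : ℝ, Real.exp (-(δ / 2) * t ^ 2) with hI
  have hI0 : 0 ≤ I := integral_nonneg fun t => (Real.exp_pos _).le
  have hcont : Continuous (anti g) :=
    continuous_iff_continuousAt.mpr fun x => (anti_hasDerivAt ⟨hc, δ, C, hδ, hb⟩ x).continuousAt
  refine ⟨hcont, δ / 2, C * I, half_pos hδ, fun x => ?_⟩
  -- pointwise bound on the relevant half line
  have hbound : ∀ s : Set ℝ, MeasurableSet s → (∀ t ∈ s, t ^ 2 ≥ x ^ 2) →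
      |∫ t in s, g t| ≤ C * I * Real.exp (-(δ / 2) * x ^ 2) := by
    intro s hs hts
    have h1 : |∫ t in s, g t| ≤ ∫ t in s, |g t| := by
      simpa [Real.norm_eq_abs] using
        norm_integral_le_integral_norm (μ := volume.restrict s) g
    have h2 : ∫ t in s, |g t| ≤
        ∫ t in s, (C * Real.exp (-(δ / 2) * x ^ 2)) * Real.exp (-(δ / 2) * t ^ 2) := by
      refine setIntegral_mono_on hint.abs.integrableOn
        (((hintb.const_mul _)).integrableOn) hs fun t ht => ?_
      have ht2 := hts t ht
      calc |g t| ≤ C * Real.exp (-δ * t ^ 2) := hb t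
        _ ≤ C * (Real.exp (-(δ / 2) * x ^ 2) * Real.exp (-(δ / 2) * t ^ 2)) := by
            rw [← Real.exp_add]
            refine mul_le_mul_of_nonneg_left (Real.exp_le_exp.mpr (by nlinarith)) hC
        _ = (C * Real.exp (-(δ / 2) * x ^ 2)) * Real.exp (-(δ / 2) * t ^ 2) := by ring
    have h3 : ∫ t in s, (C * Real.exp (-(δ / 2) * x ^ 2)) * Real.exp (-(δ / 2) * t ^ 2)
        = (C * Real.exp (-(δ / 2) * x ^ 2)) * ∫ t in s, Real.exp (-(δ / 2) * t ^ 2) :=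
      MeasureTheory.integral_const_mul _ _
    have h4 : ∫ t in s, Real.exp (-(δ / 2) * t ^ 2) ≤ I := by
      rw [hI]
      exact setIntegral_le_integral hintb (by filter_upwards with t using (Real.exp_pos _).le)
    calc |∫ t in s, g t| ≤ _ := h1.trans (h2.trans_eq h3)
      _ ≤ C * I * Real.exp (-(δ / 2) * x ^ 2) := by
          have := mul_le_mul_of_nonneg_left h4
            (mul_nonneg hC (Real.exp_pos (-(δ / 2) * x ^ 2)).le)
          calc C * Real.exp (-(δ / 2) * x ^ 2) * ∫ t in s, Real.exp (-(δ / 2) * t ^ 2)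
              ≤ C * Real.exp (-(δ / 2) * x ^ 2) * I := this
            _ = C * I * Real.exp (-(δ / 2) * x ^ 2) := by ring
  rcases le_or_gt x 0 with hx | hx
  · exact hbound _ measurableSet_Iic fun t ht => by
      have : t ≤ x := ht
      nlinarith
  · have hsplit : anti g x = - ∫ t in Set.Ioi x, g t := by
      have := integral_add_compl (measurableSet_Iic (a := x)) hint
      rw [Set.compl_Iic] at this
      rw [← this] at h0
      simp only [anti]
      linarith [h0]
    rw [hsplit, abs_neg]
    exact hbound _ measurableSet_Ioi fun t ht => by
      have : x ≤ t := le_of_lt ht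
      nlinarith

/-- `g` alternates sign (at least) `m` times -/
def Alt (g : ℝ → ℝ) (m : ℕ) : Prop :=
  ∃ ε : ℝ, (ε = 1 ∨ ε = -1) ∧ ∃ t : ℕ → ℝ,
    (∀ i, i < m → t i < t (i + 1)) ∧ ∀ i, i ≤ m → 0 < ε * (-1) ^ i * g (t i)

lemma alt_zero {g : ℝ → ℝ} {x₀ : ℝ} (h : g x₀ ≠ 0) : Alt g 0 := by
  rcases lt_or_gt_of_ne h with hneg | hpos
  · refine ⟨-1, Or.inr rfl, fun _ => x₀, fun i hi => by omega, fun i hi => ?_⟩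
    interval_cases i
    simpa using hneg
  · refine ⟨1, Or.inl rfl, fun _ => x₀, fun i hi => by omega, fun i hi => ?_⟩
    interval_cases i
    simpa using hpos

lemma mvt_sign {G g : ℝ → ℝ} (hG : ∀ x, HasDerivAt G (g x) x) {A B e : ℝ} (hAB : A < B)
    (hs : 0 < e * (G B - G A)) : ∃ y, A < y ∧ y < B ∧ 0 < e * g y := by
  obtain ⟨y, hy, heq⟩ := exists_hasDerivAt_eq_slope G g hAB
    (fun x _ => (hG x).continuousAt.continuousWithinAt) (fun x _ => hG x)
  refine ⟨y, hy.1, hy.2, ?_⟩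
  rw [heq]
  have hBA : 0 < B - A := by linarith [hy.1, hy.2]
  calc (0:ℝ) < (e * (G B - G A)) / (B - A) := div_pos hs hBA
    _ = e * ((G B - G A) / (B - A)) := by ring

lemma alt_step {G g : ℝ → ℝ} (hG : ∀ x, HasDerivAt G (g x) x)
    (hbot : Tendsto G atBot (𝓝 0)) (htop : Tendsto G atTop (𝓝 0))
    {m : ℕ} (hA : Alt G m) : Alt g (m + 1) := by
  classical
  obtain ⟨ε, hε, t, hmono, hsign⟩ := hA
  have hεabs : |ε| = 1 := by rcases hε with rfl | rfl <;> norm_num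
  have habs : ∀ i, i ≤ m → |G (t i)| = ε * (-1) ^ i * G (t i) := by
    intro i hi
    have h := hsign i hi
    have h1 : |ε * (-1) ^ i * G (t i)| = |G (t i)| := by
      rw [abs_mul, abs_mul, abs_pow, abs_neg, abs_one, one_pow, hεabs, one_mul, one_mul]
    rw [← h1, abs_of_pos h]
  have hebd : ∀ (i : ℕ) (x : ℝ), ε * (-1) ^ i * G x ≤ |G x| := by
    intro i x
    calc ε * (-1) ^ i * G x ≤ |ε * (-1) ^ i * G x| := le_abs_self _
      _ = |G x| := by
        rw [abs_mul, abs_mul, abs_pow, abs_neg, abs_one, one_pow, hεabs, one_mul, one_mul]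
  -- left auxiliary point
  have h00 : 0 < |G (t 0)| := by
    rw [habs 0 (Nat.zero_le m)]; exact hsign 0 (Nat.zero_le m)
  have habs0 : Tendsto (fun x => |G x|) atBot (𝓝 0) := by
    have := hbot.abs; simpa using this
  obtain ⟨u, hu1, hu2⟩ := ((habs0.eventually_lt_const h00).and
    (eventually_lt_atBot (t 0))).exists
  have habsT : Tendsto (fun x => |G x|) atTop (𝓝 0) := by
    have := htop.abs; simpa using this
  have h0m : 0 < |G (t m)| := by
    rw [habs m le_rfl]; exact hsign m le_rfl
  obtain ⟨v, hv1, hv2⟩ := ((habsT.eventually_lt_const h0m).and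
    (eventually_gt_atTop (t m))).exists
  -- the three families of new points
  obtain ⟨y₀, hy₀1, hy₀2, hy₀3⟩ : ∃ y, u < y ∧ y < t 0 ∧ 0 < ε * g y := by
    refine mvt_sign hG hu2 ?_
    have e1 : ε * G (t 0) = |G (t 0)| := by
      have := habs 0 (Nat.zero_le m); simpa using this.symm
    have e2 : ε * G u ≤ |G u| := by have := hebd 0 u; simpa using this
    have : ε * (G (t 0) - G u) = ε * G (t 0) - ε * G u := by ring
    rw [this, e1]
    linarith
  obtain ⟨yv, hyv1, hyv2, hyv3⟩ : ∃ y, t m < y ∧ y < v ∧ 0 < ε * (-1) ^ (m + 1) * g y := by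
    refine mvt_sign hG hv2 ?_
    have e1 : ε * (-1) ^ m * G (t m) = |G (t m)| := (habs m le_rfl).symm
    have e2 : ε * (-1) ^ (m + 1) * G v ≥ -|G v| := by
      have h1 := hebd (m + 2) v
      have h2 : ε * (-1) ^ (m + 2) * G v = -(ε * (-1) ^ (m + 1) * G v) := by ring
      linarith [h1, h2.symm.le]
    have e3 : ε * (-1) ^ (m + 1) * (G v - G (t m))
        = ε * (-1) ^ (m + 1) * G v + ε * (-1) ^ m * G (t m) := by ring
    rw [e3, e1]
    linarith
  have hmid : ∀ i, i < m → ∃ y, t i < y ∧ y < t (i + 1) ∧ 0 < ε * (-1) ^ (i + 1) * g y := by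
    intro i hi
    refine mvt_sign hG (hmono i hi) ?_
    have e1 : ε * (-1) ^ (i + 1) * (G (t (i + 1)) - G (t i))
        = ε * (-1) ^ (i + 1) * G (t (i + 1)) + ε * (-1) ^ i * G (t i) := by ring
    rw [e1, ← habs (i + 1) (by omega), ← habs i (by omega)]
    exact add_pos (by rw [habs (i + 1) (by omega)]; exact hsign (i + 1) (by omega))
      (by rw [habs i (by omega)]; exact hsign i (by omega))
  choose! mid hm1 hm2 hm3 using hmid
  -- assemble the new sequence
  refine ⟨ε, hε, fun j => if j = 0 then y₀ else if j ≤ m then mid (j - 1) else yv, ?_, ?_⟩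
  · intro j hj
    have hsl : (if (j:ℕ) = 0 then y₀ else if j ≤ m then mid (j - 1) else yv) < t j := by
      rcases Nat.eq_zero_or_pos j with rfl | hj1
      · simpa using hy₀2
      · rw [if_neg (by omega), if_pos (by omega : j ≤ m)]
        have := hm2 (j - 1) (by omega)
        rwa [show j - 1 + 1 = j from by omega] at this
    have hsu : t j < (if (j:ℕ) + 1 = 0 then y₀ else if j + 1 ≤ m then mid (j + 1 - 1) else yv) := by
      rw [if_neg (by omega)]
      rcases le_or_gt (j + 1) m with hle | hgt
      · rw [if_pos hle, show j + 1 - 1 = j from by omega]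
        exact hm1 j (by omega)
      · rw [if_neg (by omega), show j = m from by omega]
        exact hyv1
    exact hsl.trans hsu
  · intro j hj
    show 0 < ε * (-1) ^ j * g (if j = 0 then y₀ else if j ≤ m then mid (j - 1) else yv)
    rcases Nat.eq_zero_or_pos j with rfl | hj1
    · simpa using hy₀3
    rcases le_or_gt j m with hle | hgt
    · rw [if_neg (by omega), if_pos hle]
      have := hm3 (j - 1) (by omega)
      rwa [show j - 1 + 1 = j from by omega] at this
    · rw [if_neg (by omega), if_neg (by omega), show j = m + 1 from by omega]
      exact hyv3

lemma Decays.congr {g h : ℝ → ℝ} (hg : Decays g) (he : ∀ x, g x = h x) : Decays h := by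
  rwa [funext he] at hg

/-- solve `q' + c q = r` in polynomials, `c ≠ 0` -/
lemma exists_ode {c : ℝ} (hc : c ≠ 0) :
    ∀ (n : ℕ) (r : Polynomial ℝ), r.natDegree ≤ n →
      ∃ q : Polynomial ℝ, Polynomial.derivative q + c • q = r ∧ q.natDegree ≤ r.natDegree := by
  intro n
  induction n with
  | zero =>
      intro r hr
      obtain ⟨b, rfl⟩ := Polynomial.natDegree_eq_zero.mp (Nat.le_zero.mp hr)
      refine ⟨c⁻¹ • Polynomial.C b, ?_, Polynomial.natDegree_smul_le _ _⟩
      simp only [Polynomial.derivative_smul, Polynomial.derivative_C, smul_zero, zero_add,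
        smul_smul, mul_inv_cancel₀ hc, one_smul]
  | succ n ih =>
      intro r hr
      by_cases h0 : r.natDegree = 0
      · obtain ⟨b, rfl⟩ := Polynomial.natDegree_eq_zero.mp h0
        exact ⟨c⁻¹ • Polynomial.C b, by
          simp only [Polynomial.derivative_smul, Polynomial.derivative_C, smul_zero, zero_add,
            smul_smul, mul_inv_cancel₀ hc, one_smul],
          Polynomial.natDegree_smul_le _ _⟩
      · have hd : (Polynomial.derivative r).natDegree ≤ n := by
          have := Polynomial.natDegree_derivative_lt h0
          omega
        obtain ⟨sP, hseq, hsdeg⟩ := ih ((-c⁻¹) • Polynomial.derivative r)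
          (le_trans (Polynomial.natDegree_smul_le _ _) hd)
        refine ⟨c⁻¹ • r + sP, ?_, ?_⟩
        · rw [map_add, Polynomial.derivative_smul, smul_add, smul_smul,
            mul_inv_cancel₀ hc, one_smul, eq_sub_of_add_eq hseq, neg_smul]
          abel
        · refine le_trans (Polynomial.natDegree_add_le _ _) (max_le
            (Polynomial.natDegree_smul_le _ _) (le_trans hsdeg ?_))
          refine le_trans (Polynomial.natDegree_smul_le _ _) ?_
          have := Polynomial.natDegree_derivative_lt h0
          omega

lemma decays_xpow_mul {g : ℝ → ℝ} (hg : Decays g) (i : ℕ) :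
    Decays (fun x => g x * x ^ i) :=
  (hg.poly_mul (Polynomial.X ^ i)).congr fun x => by simp [mul_comm]

lemma decays_xpow_exp_mul {g : ℝ → ℝ} (hg : Decays g) (c : ℝ) (i : ℕ) :
    Decays (fun x => g x * (x ^ i * Real.exp (c * x))) :=
  (((hg.mul_exp c)).poly_mul (Polynomial.X ^ i)).congr fun x => by simp; ring

lemma decays_polyexp_mul {g : ℝ → ℝ} (hg : Decays g) (c : ℝ) (q : Polynomial ℝ) :
    Decays (fun x => g x * (q.eval x * Real.exp (c * x))) :=
  (((hg.mul_exp c)).poly_mul q).congr fun x => by ring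

/-- span: vanishing moments against `x^j e^{cx}` extend to polynomials of low degree -/
lemma integral_polyexp_zero {g : ℝ → ℝ} (hg : Decays g) {c : ℝ} {l : ℕ}
    (hm : ∀ j, j < l → ∫ x : ℝ, g x * (x ^ j * Real.exp (c * x)) = 0)
    (q : Polynomial ℝ) (hq : q.natDegree < l) :
    ∫ x : ℝ, g x * (q.eval x * Real.exp (c * x)) = 0 := by
  have heq : (fun x : ℝ => g x * (q.eval x * Real.exp (c * x)))
      = fun x : ℝ => ∑ i ∈ Finset.range l, q.coeff i * (g x * (x ^ i * Real.exp (c * x))) := by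
    funext x
    rw [Polynomial.eval_eq_sum_range' hq, Finset.sum_mul, Finset.mul_sum]
    exact Finset.sum_congr rfl fun i _ => by ring
  rw [heq, integral_finset_sum _ fun i _ =>
    ((decays_xpow_exp_mul hg c i).const_mul (q.coeff i)).integrable]
  refine Finset.sum_eq_zero fun i hi => ?_
  rw [MeasureTheory.integral_const_mul, hm i (Finset.mem_range.mp hi), mul_zero]

/-- integration by parts against a decaying function with zero mean -/
lemma ibp_zero {g v v' : ℝ → ℝ} (hg : Decays g)
    (hv : ∀ x, HasDerivAt v (v' x) x)
    (h1 : Decays (fun x => anti g x * v' x)) (h2 : Decays (fun x => g x * v x))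
    (h3 : Decays (fun x => anti g x * v x)) (hgv : ∫ x : ℝ, g x * v x = 0) :
    ∫ x : ℝ, anti g x * v' x = 0 := by
  have hres := integral_mul_deriv_eq_deriv_mul (fun x _ => anti_hasDerivAt hg x) (fun x _ => hv x)
    h1.integrable h2.integrable h3.tendsto_zero_atBot h3.tendsto_zero_atTop
  simpa [hgv] using hres

lemma anti_mom {g : ℝ → ℝ} (hg : Decays g) {m : ℕ}
    (hm : ∀ j, j < m + 1 → ∫ x : ℝ, g x * x ^ j = 0) :
    ∀ j, j < m → ∫ x : ℝ, anti g x * x ^ j = 0 := by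
  intro j hj
  have h0 : ∫ x : ℝ, g x = 0 := by simpa using hm 0 (by omega)
  have hGd := anti_decays hg h0
  have hv : ∀ x : ℝ, HasDerivAt (fun y : ℝ => y ^ (j + 1) / ((j : ℝ) + 1)) (x ^ j) x := by
    intro x
    have hne : ((j : ℝ) + 1) ≠ 0 := by positivity
    have := (hasDerivAt_pow (j + 1) x).div_const ((j : ℝ) + 1)
    refine this.congr_deriv ?_
    push_cast
    field_simp
  have hgv : ∫ x : ℝ, g x * (x ^ (j + 1) / ((j : ℝ) + 1)) = 0 := by
    have heq : (fun x : ℝ => g x * (x ^ (j + 1) / ((j : ℝ) + 1)))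
        = fun x : ℝ => ((j : ℝ) + 1)⁻¹ * (g x * x ^ (j + 1)) := by
      funext x; ring
    rw [heq, MeasureTheory.integral_const_mul, hm (j + 1) (by omega), mul_zero]
  exact ibp_zero hg hv (decays_xpow_mul hGd j)
    ((decays_xpow_mul hg (j + 1)).const_mul (((j : ℝ) + 1)⁻¹) |>.congr fun x => by ring)
    ((decays_xpow_mul hGd (j + 1)).const_mul (((j : ℝ) + 1)⁻¹) |>.congr fun x => by ring)
    hgv

lemma anti_momE {g : ℝ → ℝ} {c : ℝ} (hc : c ≠ 0) (hg : Decays g)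
    (h0 : ∫ x : ℝ, g x = 0) {l : ℕ}
    (hm : ∀ j, j < l → ∫ x : ℝ, g x * (x ^ j * Real.exp (c * x)) = 0) :
    ∀ j, j < l → ∫ x : ℝ, anti g x * (x ^ j * Real.exp (c * x)) = 0 := by
  intro j hj
  have hGd := anti_decays hg h0
  obtain ⟨q, hq, hqdeg⟩ := exists_ode hc j (Polynomial.X ^ j : Polynomial ℝ)
    (le_of_eq (Polynomial.natDegree_X_pow j))
  have hqj : q.natDegree ≤ j := le_trans hqdeg (le_of_eq (Polynomial.natDegree_X_pow j))
  have hv : ∀ x : ℝ, HasDerivAt (fun y : ℝ => q.eval y * Real.exp (c * y))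
      (x ^ j * Real.exp (c * x)) x := by
    intro x
    have hexp : HasDerivAt (fun y : ℝ => Real.exp (c * y)) (Real.exp (c * x) * c) x := by
      have := ((hasDerivAt_id x).const_mul c).exp
      simpa [mul_comm] using this
    have := (q.hasDerivAt x).mul hexp
    refine this.congr_deriv ?_
    have : Polynomial.eval x (Polynomial.derivative q + c • q) = x ^ j := by rw [hq]; simp
    simp only [Polynomial.eval_add, Polynomial.eval_smul, smul_eq_mul] at this
    rw [← this]; ring
  have hgv : ∫ x : ℝ, g x * (q.eval x * Real.exp (c * x)) = 0 :=
    integral_polyexp_zero hg hm q (lt_of_le_of_lt hqj hj)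
  exact ibp_zero hg hv (decays_xpow_exp_mul hGd c j)
    (decays_polyexp_mul hg c q) (decays_polyexp_mul hGd c q) hgv

/-- main induction, pure polynomial moments force alternations -/
lemma alt_of_mom : ∀ (m : ℕ) (g : ℝ → ℝ), Decays g → (∃ x, g x ≠ 0) →
    (∀ j, j < m → ∫ x : ℝ, g x * x ^ j = 0) → Alt g m := by
  intro m
  induction m with
  | zero =>
      intro g _ hx _
      obtain ⟨x₀, hx₀⟩ := hx
      exact alt_zero hx₀
  | succ m ih =>
      intro g hg hx hmom
      have h0 : ∫ x : ℝ, g x = 0 := by simpa using hmom 0 (by omega)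
      have hGd := anti_decays hg h0
      have hGne : ∃ x, anti g x ≠ 0 := by
        by_contra hno
        push_neg at hno
        obtain ⟨x₀, hx₀⟩ := hx
        have hd := anti_hasDerivAt hg x₀
        rw [show anti g = (fun _ : ℝ => (0:ℝ)) from funext hno] at hd
        exact hx₀ (hd.unique (hasDerivAt_const x₀ 0))
      have hAlt := ih (anti g) hGd hGne (anti_mom hg hmom)
      exact alt_step (anti_hasDerivAt hg) hGd.tendsto_zero_atBot hGd.tendsto_zero_atTop hAlt

/-- mixed moments force alternations -/
lemma alt_of_momE {c : ℝ} (hc : c ≠ 0) : ∀ (l₂ l₁ : ℕ) (g : ℝ → ℝ), Decays g →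
    (∃ x, g x ≠ 0) → (∀ j, j < l₂ → ∫ x : ℝ, g x * x ^ j = 0) →
    (∀ j, j < l₁ → ∫ x : ℝ, g x * (x ^ j * Real.exp (c * x)) = 0) → Alt g (l₁ + l₂) := by
  intro l₂
  induction l₂ with
  | zero =>
      intro l₁ g hg hx _ hmomE
      have hh : Decays (fun x => g x * Real.exp (c * x)) :=
        (hg.mul_exp c).congr fun x => by ring
      have hhx : ∃ x, g x * Real.exp (c * x) ≠ 0 := by
        obtain ⟨x₀, hx₀⟩ := hx
        exact ⟨x₀, mul_ne_zero hx₀ (Real.exp_ne_zero _)⟩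
      have hmom : ∀ j, j < l₁ → ∫ x : ℝ, (g x * Real.exp (c * x)) * x ^ j = 0 := by
        intro j hj
        have := hmomE j hj
        rw [show (fun x : ℝ => (g x * Real.exp (c * x)) * x ^ j)
          = fun x : ℝ => g x * (x ^ j * Real.exp (c * x)) from funext fun x => by ring]
        exact this
      have hAlt := alt_of_mom l₁ _ hh hhx hmom
      obtain ⟨ε, hε, t, hmono, hsign⟩ := hAlt
      refine ⟨ε, hε, t, by simpa using hmono, fun i hi => ?_⟩
      have h : 0 < ε * (-1) ^ i * (g (t i) * Real.exp (c * t i)) := hsign i (by omega)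
      have hep := Real.exp_pos (c * t i)
      by_contra hcon
      push_neg at hcon
      nlinarith [h, hep, mul_nonpos_of_nonpos_of_nonneg hcon hep.le]
  | succ l₂ ih =>
      intro l₁ g hg hx hmom hmomE
      have h0 : ∫ x : ℝ, g x = 0 := by simpa using hmom 0 (by omega)
      have hGd := anti_decays hg h0
      have hGne : ∃ x, anti g x ≠ 0 := by
        by_contra hno
        push_neg at hno
        obtain ⟨x₀, hx₀⟩ := hx
        have hd := anti_hasDerivAt hg x₀
        rw [show anti g = (fun _ : ℝ => (0:ℝ)) from funext hno] at hd
        exact hx₀ (hd.unique (hasDerivAt_const x₀ 0))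
      have hAlt := ih l₁ (anti g) hGd hGne (anti_mom hg hmom) (anti_momE hc hg h0 hmomE)
      have := alt_step (anti_hasDerivAt hg) hGd.tendsto_zero_atBot hGd.tendsto_zero_atTop hAlt
      rwa [show l₁ + l₂ + 1 = l₁ + (l₂ + 1) from by omega] at this


lemma w1_eq (N a x : ℝ) : w1 N a x = w2 N a x * Real.exp (2 * N * a * x) := by
  rw [w1, w2, ← Real.exp_add]; congr 1; ring

lemma decays_w2 {N a : ℝ} (hN : 0 < N) : Decays (w2 N a) := by
  have h := decays_exp_quad (b := N / 2) (c := -(N * a)) (by linarith)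
  exact h.congr fun x => by rw [w2]; congr 1; ring

lemma keyLemma {N a : ℝ} (hN : 0 < N) (ha : a ≠ 0) (k₁ k₂ : ℕ) (Q : Polynomial ℝ)
    (hQ : Q ≠ 0)
    (h1 : ∀ j, j < k₁ → ∫ x : ℝ, Q.eval x * x ^ j * w1 N a x = 0)
    (h2 : ∀ j, j < k₂ → ∫ x : ℝ, Q.eval x * x ^ j * w2 N a x = 0) :
    k₁ + k₂ ≤ Q.natDegree := by
  classical
  set c : ℝ := 2 * N * a with hc
  have hcne : c ≠ 0 := mul_ne_zero (mul_ne_zero two_ne_zero (ne_of_gt hN)) ha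
  set g : ℝ → ℝ := fun x => Q.eval x * w2 N a x with hg
  have hgd : Decays g := (decays_w2 hN).poly_mul Q
  have hgx : ∃ x, g x ≠ 0 := by
    obtain ⟨x₀, hx₀⟩ : ∃ x₀ : ℝ, Q.eval x₀ ≠ 0 := by
      by_contra h
      push_neg at h
      exact hQ (Polynomial.funext fun r => by simp [h r])
    exact ⟨x₀, mul_ne_zero hx₀ (Real.exp_ne_zero _)⟩
  have hmom : ∀ j, j < k₂ → ∫ x : ℝ, g x * x ^ j = 0 := by
    intro j hj
    rw [show (fun x : ℝ => g x * x ^ j) = fun x : ℝ => Q.eval x * x ^ j * w2 N a x from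
      funext fun x => by simp only [hg]; ring]
    exact h2 j hj
  have hmomE : ∀ j, j < k₁ → ∫ x : ℝ, g x * (x ^ j * Real.exp (c * x)) = 0 := by
    intro j hj
    rw [show (fun x : ℝ => g x * (x ^ j * Real.exp (c * x)))
        = fun x : ℝ => Q.eval x * x ^ j * w1 N a x from
      funext fun x => by simp only [hg, hc, w1_eq]; ring]
    exact h1 j hj
  have hAlt := alt_of_momE hcne k₂ k₁ g hgd hgx hmom hmomE
  set n := k₁ + k₂ with hn
  obtain ⟨ε, hε, t, hmono, hsign⟩ := hAlt
  have hQsign : ∀ i, i ≤ n → 0 < ε * (-1) ^ i * Q.eval (t i) := by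
    intro i hi
    have h : 0 < ε * (-1) ^ i * (Q.eval (t i) * w2 N a (t i)) := hsign i hi
    have hw : 0 < w2 N a (t i) := Real.exp_pos _
    by_contra hcon
    push_neg at hcon
    nlinarith [mul_nonpos_of_nonpos_of_nonneg hcon hw.le]
  have hroot : ∀ i, i < n → ∃ y, t i < y ∧ y < t (i + 1) ∧ Q.eval y = 0 := by
    intro i hi
    have hQi := hQsign i (by omega)
    have hQi1 := hQsign (i + 1) (by omega)
    have hflip : ε * (-1) ^ (i + 1) = -(ε * (-1) ^ i) := by rw [pow_succ]; ring
    have hcont : ContinuousOn (fun y => Q.eval y) (Set.Icc (t i) (t (i + 1))) :=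
      (Polynomial.continuous Q).continuousOn
    rcases lt_trichotomy (Q.eval (t i)) 0 with hlt | heq | hgt
    · have hs : 0 < -(ε * (-1) ^ i) := by nlinarith
      have hpos : 0 < Q.eval (t (i + 1)) := by
        rw [hflip] at hQi1; nlinarith
      have hmem : (0:ℝ) ∈ Set.Ioo (Q.eval (t i)) (Q.eval (t (i + 1))) := ⟨hlt, hpos⟩
      obtain ⟨y, hy, hQy⟩ := intermediate_value_Ioo (hmono i hi).le hcont hmem
      exact ⟨y, hy.1, hy.2, hQy⟩
    · rw [heq, mul_zero] at hQi; exact absurd hQi (lt_irrefl 0)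
    · have hs : 0 < ε * (-1) ^ i := by nlinarith
      have hneg : Q.eval (t (i + 1)) < 0 := by
        rw [hflip] at hQi1; nlinarith
      have hmem : (0:ℝ) ∈ Set.Ioo (Q.eval (t (i + 1))) (Q.eval (t i)) := ⟨hneg, hgt⟩
      obtain ⟨y, hy, hQy⟩ := intermediate_value_Ioo' (hmono i hi).le hcont hmem
      exact ⟨y, hy.1, hy.2, hQy⟩
  choose! r hr1 hr2 hr3 using hroot
  have hchain : ∀ j, j ≤ n → ∀ i, i ≤ j → t i ≤ t j := by
    intro j
    induction j with
    | zero => intro _ i hi; interval_cases i; exact le_rfl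
    | succ j ihj =>
        intro hj i hi
        rcases Nat.lt_or_ge i (j + 1) with h | h
        · exact le_trans (ihj (by omega) i (by omega)) (hmono j (by omega)).le
        · have : i = j + 1 := by omega
          subst this; exact le_rfl
  have hrmono : ∀ i j, i < j → j < n → r i < r j := by
    intro i j hij hj
    calc r i < t (i + 1) := hr2 i (by omega)
      _ ≤ t j := hchain j (by omega) (i + 1) (by omega)
      _ < r j := hr1 j hj
  have hinj : Set.InjOn r (Finset.range n) := by
    intro i hi j hj hij
    by_contra hne
    rcases Nat.lt_or_ge i j with h | h
    · exact absurd hij (ne_of_lt (hrmono i j h (Finset.mem_range.mp hj)))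
    · have h' : j < i := by omega
      exact absurd hij.symm (ne_of_lt (hrmono j i h' (Finset.mem_range.mp hi)))
  have hsub : (Finset.range n).image r ⊆ Q.roots.toFinset := by
    intro y hy
    obtain ⟨i, hi, rfl⟩ := Finset.mem_image.mp hy
    rw [Multiset.mem_toFinset, Polynomial.mem_roots hQ]
    exact hr3 i (Finset.mem_range.mp hi)
  calc n = ((Finset.range n).image r).card := (Finset.card_image_of_injOn hinj).symm ▸
        (Finset.card_range n).symm ▸ rfl
    _ ≤ Q.roots.toFinset.card := Finset.card_le_card hsub
    _ ≤ Multiset.card Q.roots := Q.roots.toFinset_card_le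
    _ ≤ Q.natDegree := Q.card_roots'

lemma decays_w1 {N a : ℝ} (hN : 0 < N) : Decays (w1 N a) := by
  have h := decays_exp_quad (b := N / 2) (c := N * a) (by linarith)
  exact h.congr fun x => by rw [w1]; congr 1; ring

lemma integ1 {N a : ℝ} (hN : 0 < N) (p : Polynomial ℝ) (j : ℕ) :
    Integrable (fun x : ℝ => p.eval x * x ^ j * w1 N a x) :=
  (((decays_w1 hN).poly_mul (p * Polynomial.X ^ j)).congr fun x => by
    rw [Polynomial.eval_mul, Polynomial.eval_pow, Polynomial.eval_X]).integrable

lemma integ2 {N a : ℝ} (hN : 0 < N) (p : Polynomial ℝ) (j : ℕ) :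
    Integrable (fun x : ℝ => p.eval x * x ^ j * w2 N a x) :=
  (((decays_w2 hN).poly_mul (p * Polynomial.X ^ j)).congr fun x => by
    rw [Polynomial.eval_mul, Polynomial.eval_pow, Polynomial.eval_X]).integrable

/-- Existence and uniqueness of the multiple Hermite polynomials,
and non-vanishing of the normalization constants. -/
theorem statement12 (N a : ℝ) (hN : 0 < N) (ha : a ≠ 0) (k₁ k₂ : ℕ) :
    (∃! P : Polynomial ℝ, IsMHP N a k₁ k₂ P) ∧
    ∀ P : Polynomial ℝ, IsMHP N a k₁ k₂ P → hc1 N a k₁ P ≠ 0 ∧ hc2 N a k₂ P ≠ 0 := by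
  classical
  set n := k₁ + k₂ with hn
  -- the evaluation linear map
  let V := Polynomial.degreeLT ℝ n
  haveI : FiniteDimensional ℝ V := Module.Finite.equiv (Polynomial.degreeLTEquiv ℝ n).symm
  let L : V →ₗ[ℝ] (Fin k₁ → ℝ) × (Fin k₂ → ℝ) :=
    { toFun := fun Q =>
        (fun j => ∫ x : ℝ, (Q : Polynomial ℝ).eval x * x ^ (j : ℕ) * w1 N a x,
         fun j => ∫ x : ℝ, (Q : Polynomial ℝ).eval x * x ^ (j : ℕ) * w2 N a x),
      map_add' := by
        intro Q R
        refine Prod.ext ?_ ?_ <;> funext j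
        · show (∫ x : ℝ, ((Q : Polynomial ℝ) + (R : Polynomial ℝ)).eval x * x ^ (j:ℕ) * w1 N a x) = _
          rw [show (fun x : ℝ => ((Q : Polynomial ℝ) + (R : Polynomial ℝ)).eval x * x ^ (j:ℕ) * w1 N a x)
              = fun x : ℝ => (Q : Polynomial ℝ).eval x * x ^ (j:ℕ) * w1 N a x
                + (R : Polynomial ℝ).eval x * x ^ (j:ℕ) * w1 N a x from
            funext fun x => by rw [Polynomial.eval_add]; ring]
          exact integral_add (integ1 hN _ _) (integ1 hN _ _)
        · show (∫ x : ℝ, ((Q : Polynomial ℝ) + (R : Polynomial ℝ)).eval x * x ^ (j:ℕ) * w2 N a x) = _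
          rw [show (fun x : ℝ => ((Q : Polynomial ℝ) + (R : Polynomial ℝ)).eval x * x ^ (j:ℕ) * w2 N a x)
              = fun x : ℝ => (Q : Polynomial ℝ).eval x * x ^ (j:ℕ) * w2 N a x
                + (R : Polynomial ℝ).eval x * x ^ (j:ℕ) * w2 N a x from
            funext fun x => by rw [Polynomial.eval_add]; ring]
          exact integral_add (integ2 hN _ _) (integ2 hN _ _)
      map_smul' := by
        intro c Q
        refine Prod.ext ?_ ?_ <;> funext j
        · show (∫ x : ℝ, (c • (Q : Polynomial ℝ)).eval x * x ^ (j:ℕ) * w1 N a x) = _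
          rw [show (fun x : ℝ => (c • (Q : Polynomial ℝ)).eval x * x ^ (j:ℕ) * w1 N a x)
              = fun x : ℝ => c * ((Q : Polynomial ℝ).eval x * x ^ (j:ℕ) * w1 N a x) from
            funext fun x => by rw [Polynomial.eval_smul, smul_eq_mul]; ring]
          exact MeasureTheory.integral_const_mul c _
        · show (∫ x : ℝ, (c • (Q : Polynomial ℝ)).eval x * x ^ (j:ℕ) * w2 N a x) = _
          rw [show (fun x : ℝ => (c • (Q : Polynomial ℝ)).eval x * x ^ (j:ℕ) * w2 N a x)
              = fun x : ℝ => c * ((Q : Polynomial ℝ).eval x * x ^ (j:ℕ) * w2 N a x) from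
            funext fun x => by rw [Polynomial.eval_smul, smul_eq_mul]; ring]
          exact MeasureTheory.integral_const_mul c _ }
  have hLinj : Function.Injective L := by
    rw [← LinearMap.ker_eq_bot, Submodule.eq_bot_iff]
    intro Q hQker
    have hLQ : L Q = 0 := LinearMap.mem_ker.mp hQker
    have hQ0 : (Q : Polynomial ℝ) = 0 := by
      by_contra hne
      have hdeg : (Q : Polynomial ℝ).degree < (n : WithBot ℕ) := Polynomial.mem_degreeLT.mp Q.2
      have hnat : (Q : Polynomial ℝ).natDegree < n :=
        (Polynomial.natDegree_lt_iff_degree_lt hne).mpr hdeg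
      have h1 : ∀ j, j < k₁ → ∫ x : ℝ, (Q : Polynomial ℝ).eval x * x ^ j * w1 N a x = 0 := by
        intro j hj
        exact congrFun (congrArg Prod.fst hLQ) ⟨j, hj⟩
      have h2 : ∀ j, j < k₂ → ∫ x : ℝ, (Q : Polynomial ℝ).eval x * x ^ j * w2 N a x = 0 := by
        intro j hj
        exact congrFun (congrArg Prod.snd hLQ) ⟨j, hj⟩
      have := keyLemma hN ha k₁ k₂ _ hne h1 h2
      omega
    exact Subtype.ext hQ0
  have hdim : Module.finrank ℝ V = Module.finrank ℝ ((Fin k₁ → ℝ) × (Fin k₂ → ℝ)) := by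
    rw [(Polynomial.degreeLTEquiv ℝ n).finrank_eq, Module.finrank_prod,
      Module.finrank_fin_fun, Module.finrank_fin_fun, Module.finrank_fin_fun]
  have hLsurj := (LinearMap.injective_iff_surjective_of_finrank_eq_finrank hdim).mp hLinj
  obtain ⟨Q₀, hQ₀⟩ := hLsurj
    (⟨fun j => -∫ x : ℝ, (Polynomial.X ^ n : Polynomial ℝ).eval x * x ^ (j:ℕ) * w1 N a x,
      fun j => -∫ x : ℝ, (Polynomial.X ^ n : Polynomial ℝ).eval x * x ^ (j:ℕ) * w2 N a x⟩)
  set P := Polynomial.X ^ n + (Q₀ : Polynomial ℝ) with hP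
  have hQ₀deg : (Q₀ : Polynomial ℝ).degree < (n : WithBot ℕ) := Polynomial.mem_degreeLT.mp Q₀.2
  have hPmonic : P.Monic := Polynomial.monic_X_pow_add hQ₀deg
  have hPdeg : P.natDegree = n := by
    have h1 : (Polynomial.X ^ n : Polynomial ℝ).degree = (n : WithBot ℕ) :=
      Polynomial.degree_X_pow n
    have h2 : P.degree = (n : WithBot ℕ) := by
      rw [hP, Polynomial.degree_add_eq_left_of_degree_lt (by rw [h1]; exact hQ₀deg), h1]
    exact Polynomial.natDegree_eq_of_degree_eq_some h2
  have hPint1 : ∀ j < k₁, ∫ x : ℝ, P.eval x * x ^ j * w1 N a x = 0 := by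
    intro j hj
    rw [show (fun x : ℝ => P.eval x * x ^ j * w1 N a x)
        = fun x : ℝ => (Polynomial.X ^ n : Polynomial ℝ).eval x * x ^ j * w1 N a x
          + (Q₀ : Polynomial ℝ).eval x * x ^ j * w1 N a x from
      funext fun x => by rw [hP, Polynomial.eval_add]; ring]
    rw [integral_add (integ1 hN _ _) (integ1 hN _ _)]
    have := congrFun (congrArg Prod.fst hQ₀) ⟨j, hj⟩
    simp only [L, LinearMap.coe_mk, AddHom.coe_mk, Fin.val_mk] at this
    rw [this]
    ring
  have hPint2 : ∀ j < k₂, ∫ x : ℝ, P.eval x * x ^ j * w2 N a x = 0 := by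
    intro j hj
    rw [show (fun x : ℝ => P.eval x * x ^ j * w2 N a x)
        = fun x : ℝ => (Polynomial.X ^ n : Polynomial ℝ).eval x * x ^ j * w2 N a x
          + (Q₀ : Polynomial ℝ).eval x * x ^ j * w2 N a x from
      funext fun x => by rw [hP, Polynomial.eval_add]; ring]
    rw [integral_add (integ2 hN _ _) (integ2 hN _ _)]
    have := congrFun (congrArg Prod.snd hQ₀) ⟨j, hj⟩
    simp only [L, LinearMap.coe_mk, AddHom.coe_mk, Fin.val_mk] at this
    rw [this]
    ring
  have hPmhp : IsMHP N a k₁ k₂ P := ⟨hPmonic, hPdeg, hPint1, hPint2⟩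
  have huniq : ∀ P₁ P₂ : Polynomial ℝ, IsMHP N a k₁ k₂ P₁ → IsMHP N a k₁ k₂ P₂ → P₁ = P₂ := by
    intro P₁ P₂ h₁ h₂
    obtain ⟨hm₁, hd₁, hw₁₁, hw₁₂⟩ := h₁
    obtain ⟨hm₂, hd₂, hw₂₁, hw₂₂⟩ := h₂
    by_contra hne
    have hD : P₁ - P₂ ≠ 0 := sub_ne_zero.mpr hne
    have hdegeq : P₁.degree = P₂.degree := by
      rw [Polynomial.degree_eq_natDegree hm₁.ne_zero, Polynomial.degree_eq_natDegree hm₂.ne_zero,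
        hd₁, hd₂]
    have hdlt : (P₁ - P₂).degree < P₁.degree :=
      Polynomial.degree_sub_lt hdegeq hm₁.ne_zero (by rw [hm₁.leadingCoeff, hm₂.leadingCoeff])
    have hdn : (P₁ - P₂).natDegree < n := by
      have := (Polynomial.natDegree_lt_iff_degree_lt hD).mpr
        (lt_of_lt_of_le hdlt (by rw [Polynomial.degree_eq_natDegree hm₁.ne_zero, hd₁]))
      exact this
    have hcond1 : ∀ j, j < k₁ → ∫ x : ℝ, (P₁ - P₂).eval x * x ^ j * w1 N a x = 0 := by
      intro j hj
      rw [show (fun x : ℝ => (P₁ - P₂).eval x * x ^ j * w1 N a x)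
          = fun x : ℝ => P₁.eval x * x ^ j * w1 N a x - P₂.eval x * x ^ j * w1 N a x from
        funext fun x => by rw [Polynomial.eval_sub]; ring]
      rw [integral_sub (integ1 hN _ _) (integ1 hN _ _), hw₁₁ j hj, hw₂₁ j hj, sub_zero]
    have hcond2 : ∀ j, j < k₂ → ∫ x : ℝ, (P₁ - P₂).eval x * x ^ j * w2 N a x = 0 := by
      intro j hj
      rw [show (fun x : ℝ => (P₁ - P₂).eval x * x ^ j * w2 N a x)
          = fun x : ℝ => P₁.eval x * x ^ j * w2 N a x - P₂.eval x * x ^ j * w2 N a x from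
        funext fun x => by rw [Polynomial.eval_sub]; ring]
      rw [integral_sub (integ2 hN _ _) (integ2 hN _ _), hw₁₂ j hj, hw₂₂ j hj, sub_zero]
    have := keyLemma hN ha k₁ k₂ _ hD hcond1 hcond2
    omega
  refine ⟨⟨P, hPmhp, fun P' hP' => huniq P' P hP' hPmhp⟩, ?_⟩
  intro P' hP'
  obtain ⟨hm, hdeg, hw1', hw2'⟩ := hP'
  constructor
  · intro hzero
    have h1' : ∀ j, j < k₁ + 1 → ∫ x : ℝ, P'.eval x * x ^ j * w1 N a x = 0 := by
      intro j hj
      rcases Nat.lt_or_ge j k₁ with h | h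
      · exact hw1' j h
      · have hjk : j = k₁ := by omega
        subst hjk
        exact hzero
    have := keyLemma hN ha (k₁ + 1) k₂ P' hm.ne_zero h1' hw2'
    omega
  · intro hzero
    have h2' : ∀ j, j < k₂ + 1 → ∫ x : ℝ, P'.eval x * x ^ j * w2 N a x = 0 := by
      intro j hj
      rcases Nat.lt_or_ge j k₂ with h | h
      · exact hw2' j h
      · have hjk : j = k₂ := by omega
        subst hjk
        exact hzero
    have := keyLemma hN ha k₁ (k₂ + 1) P' hm.ne_zero hw1' h2'
    omega

end
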